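/- Let A, B be real symmetric n×n matrices, and suppose rank(B) = 2 and B is not semidefinite, so Q_B(x) = (ξ·x)(η·x) for linearly independent ξ, η ∈ ℝⁿ. Then every connected subset N of {x : xᵀAx = 0, xᵀBx = 0} on which Ax and Bx are everywhere linearly independent is contained in the hyperplane ξ^⊥ or in the hyperplane η^⊥. -/

import Mathlib

open Matrix

theorem transversal_locus_in_hyperplane_of_rank_two {n : ℕ}
    (A B : Matrix (Fin n) (Fin n) ℝ) (hA : A.IsSymm) (hB : B.IsSymm)
    (hrB : B.rank = 2) (ξ η : Fin n → ℝ) (hli : LinearIndependent ℝ ![ξ, η])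
    (hQB : ∀ x : Fin n → ℝ, x ⬝ᵥ B.mulVec x = (ξ ⬝ᵥ x) * (η ⬝ᵥ x))
    (N : Set (Fin n → ℝ)) (hconn : IsPreconnected N)
    (hN : N ⊆ {x : Fin n → ℝ | x ⬝ᵥ A.mulVec x = 0 ∧ x ⬝ᵥ B.mulVec x = 0})
    (htrans : ∀ x ∈ N, LinearIndependent ℝ ![A.mulVec x, B.mulVec x]) :
    (∀ x ∈ N, ξ ⬝ᵥ x = 0) ∨ (∀ x ∈ N, η ⬝ᵥ x = 0) := by
  -- symmetry of the bilinear form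
  have hsym : ∀ x y : Fin n → ℝ, x ⬝ᵥ B.mulVec y = y ⬝ᵥ B.mulVec x := by
    intro x y
    rw [Matrix.dotProduct_mulVec, ← Matrix.mulVec_transpose, hB.eq,
      dotProduct_comm]
  -- polarization
  have hpolar : ∀ x y : Fin n → ℝ,
      2 * (x ⬝ᵥ B.mulVec y) = (ξ ⬝ᵥ x) * (η ⬝ᵥ y) + (ξ ⬝ᵥ y) * (η ⬝ᵥ x) := by
    intro x y
    have h := hQB (x + y)
    rw [Matrix.mulVec_add, add_dotProduct, dotProduct_add,
      dotProduct_add, hQB x, hQB y, hsym y x,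
      dotProduct_add, dotProduct_add] at h
    ring_nf at h ⊢
    linarith
  -- at a point of N, not both ξ·x and η·x vanish
  have hne : ∀ x ∈ N, ξ ⬝ᵥ x ≠ 0 ∨ η ⬝ᵥ x ≠ 0 := by
    intro x hx
    by_contra h
    push_neg at h
    obtain ⟨h1, h2⟩ := h
    have hBx : B.mulVec x = 0 := by
      funext i
      have := hpolar (Pi.single i 1) x
      rw [h1, h2] at this
      simp at this
      simpa using this
    have := (htrans x hx).ne_zero 1
    simp [hBx] at this
  -- product vanishes on N
  have hzero : ∀ x ∈ N, (ξ ⬝ᵥ x) * (η ⬝ᵥ x) = 0 := by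
    intro x hx
    rw [← hQB x]
    exact (hN hx).2
  -- connectedness argument
  set U : Set (Fin n → ℝ) := {x | ξ ⬝ᵥ x ≠ 0}
  set V : Set (Fin n → ℝ) := {x | η ⬝ᵥ x ≠ 0}
  have hUopen : IsOpen U := isOpen_compl_iff.mpr
    (isClosed_eq (by
      have : Continuous fun x : Fin n → ℝ => ∑ i, ξ i * x i :=
        continuous_finset_sum _ fun i _ => (continuous_const.mul (continuous_apply i))
      exact this) continuous_const)
  have hVopen : IsOpen V := isOpen_compl_iff.mpr
    (isClosed_eq (by
      have : Continuous fun x : Fin n → ℝ => ∑ i, η i * x i :=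
        continuous_finset_sum _ fun i _ => (continuous_const.mul (continuous_apply i))
      exact this) continuous_const)
  have hcover : N ⊆ U ∪ V := fun x hx => hne x hx
  have hempty : ¬ (N ∩ (U ∩ V)).Nonempty := by
    rintro ⟨x, hxN, hxU, hxV⟩
    exact (mul_ne_zero hxU hxV) (hzero x hxN)
  rcases (not_and_or.mp fun ⟨h1, h2⟩ => hempty (hconn U V hUopen hVopen hcover h1 h2))
    with h | h
  · left
    intro x hx
    by_contra hc
    exact h ⟨x, hx, hc⟩
  · right
    intro x hx
    by_contra hc
    exact h ⟨x, hx, hc⟩
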